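/- Let I ⊆ ℝ be an interval and let M : ⋃_n I^n × W_n(ℝ) → I be a weighted mean (nullhomogeneous in weights, satisfying the reduction principle, the mean value property, and the elimination principle). Then for every n, every k ∈ {1,...,n}, x ∈ I^n, λ ∈ W_n(ℝ) and nonnegative λ_k' ∈ ℝ: M((x_1,...,x_{k-1},x_k,x_k,x_{k+1},...,x_n),(λ_1,...,λ_{k-1},λ_k,λ_k',λ_{k+1},...,λ_n)) = M((x_1,...,x_n),(λ_1,...,λ_{k-1},λ_k+λ_k',λ_{k+1},...,λ_n)). -/

import Mathlib

/-- A weight vector: all entries nonnegative with positive sum. -/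
def IsWeightVec (lam : List ℝ) : Prop := (∀ w ∈ lam, 0 ≤ w) ∧ 0 < lam.sum

/-- The shuffle (interleaving) of two lists of equal length. -/
def shuffle {α : Type*} (a b : List α) : List α :=
  (List.zipWith (fun p q => [p, q]) a b).flatten

/-- Lemma 1 (equiv_red): for any weighted mean `M` on an interval `I`
(nullhomogeneous in the weights, satisfying the reduction principle, the mean
value property, and the elimination principle), a repeated entry with weights
`λₖ, λₖ'` can be merged into a single entry with weight `λₖ + λₖ'`. -/
lemma shuffle_cons {α : Type*} (a b : α) (v w : List α) :
    shuffle (a::v) (b::w) = a::b::shuffle v w := rfl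

lemma shuffle_append {α : Type*} (a b c d : List α) (h : a.length = b.length) :
    shuffle (a++c) (b++d) = shuffle a b ++ shuffle c d := by
  unfold shuffle
  rw [List.zipWith_append h, List.flatten_append]

lemma shuffle_length {α : Type*} : ∀ (v w : List α), v.length = w.length →
    (shuffle v w).length = v.length + w.length := by
  intro v
  induction v with
  | nil => intro w h; cases w with
    | nil => rfl
    | cons b w => simp at h
  | cons a v ih => intro w h; cases w with
    | nil => simp at h
    | cons b w =>
      simp only [shuffle_cons, List.length_cons]
      rw [ih w (by simpa using h)]; omega

lemma mem_shuffle {α : Type*} : ∀ (v w : List α) (c : α), c ∈ shuffle v w →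
    c ∈ v ∨ c ∈ w := by
  intro v
  induction v with
  | nil => intro w c h; cases w <;> simp [shuffle] at h
  | cons a v ih => intro w c h; cases w with
    | nil => simp [shuffle] at h
    | cons b w =>
      rw [shuffle_cons] at h
      simp only [List.mem_cons] at h ⊢
      rcases h with h|h|h
      · tauto
      · tauto
      · rcases ih w c h with h|h <;> tauto

lemma sum_shuffle : ∀ (v w : List ℝ), v.length = w.length →
    (shuffle v w).sum = v.sum + w.sum := by
  intro v
  induction v with
  | nil => intro w h; cases w with
    | nil => simp [shuffle]
    | cons b w => simp at h
  | cons a v ih => intro w h; cases w with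
    | nil => simp at h
    | cons b w =>
      rw [shuffle_cons]
      simp only [List.sum_cons]
      rw [ih w (by simpa using h)]; ring

lemma zipWith_add_repl : ∀ (l : List ℝ),
    List.zipWith (· + ·) l (List.replicate l.length 0) = l := by
  intro l
  induction l with
  | nil => rfl
  | cons a l ih => simp [List.replicate_succ, ih]

lemma elimA (I : Set ℝ) (M : List ℝ → List ℝ → ℝ)
    (helim : ∀ (x₁ x₂ lam₁ lam₂ : List ℝ) (a : ℝ),
      x₁.length = lam₁.length → x₂.length = lam₂.length →
      (∀ b ∈ x₁ ++ a :: x₂, b ∈ I) → IsWeightVec (lam₁ ++ 0 :: lam₂) →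
      M (x₁ ++ a :: x₂) (lam₁ ++ 0 :: lam₂) = M (x₁ ++ x₂) (lam₁ ++ lam₂)) :
    ∀ (v w p pl q ql : List ℝ), v.length = w.length →
      p.length = pl.length → q.length = ql.length →
      (∀ b ∈ p ++ v ++ q, b ∈ I) → IsWeightVec (pl ++ w ++ ql) →
      M (p ++ shuffle v v ++ q) (pl ++ shuffle w (List.replicate w.length 0) ++ ql)
        = M (p ++ v ++ q) (pl ++ w ++ ql) := by
  intro v
  induction v with
  | nil =>
    intro w p pl q ql hvw _ _ _ _
    cases w with
    | nil => simp [shuffle]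
    | cons b w => simp at hvw
  | cons a v ih =>
    intro w p pl q ql hvw hp hq hmem hwv
    cases w with
    | nil => simp at hvw
    | cons b w =>
      have hvw' : v.length = w.length := by simpa using hvw
      have hS : (shuffle v v).length = v.length + v.length := shuffle_length v v rfl
      have hT : (shuffle w (List.replicate w.length 0)).length = w.length + w.length := by
        rw [shuffle_length w _ (by simp)]; simp
      simp only [List.length_cons, List.replicate_succ, shuffle_cons]
      have e1 : p ++ (a :: a :: shuffle v v) ++ q
          = (p ++ [a]) ++ a :: (shuffle v v ++ q) := by simp
      have e2 : pl ++ (b :: 0 :: shuffle w (List.replicate w.length 0)) ++ ql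
          = (pl ++ [b]) ++ 0 :: (shuffle w (List.replicate w.length 0) ++ ql) := by simp
      rw [e1, e2]
      have hmem' : ∀ c ∈ (p ++ [a]) ++ a :: (shuffle v v ++ q), c ∈ I := by
        intro c hc
        have hms := mem_shuffle v v c
        have hall : ∀ d : ℝ, d ∈ p ∨ d = a ∨ d ∈ v ∨ d ∈ q → d ∈ I := by
          intro d hd
          apply hmem
          simp only [List.mem_append, List.mem_cons]
          tauto
        apply hall
        simp only [List.mem_append, List.mem_cons, List.mem_singleton,
          List.not_mem_nil, or_false] at hc
        tauto
      have hsumT : (shuffle w (List.replicate w.length 0)).sum = w.sum := by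
        rw [sum_shuffle w _ (by simp)]; simp
      have hnn := hwv.1
      have hwv' : IsWeightVec ((pl ++ [b]) ++ 0 :: (shuffle w (List.replicate w.length 0) ++ ql)) := by
        constructor
        · intro c hc
          rcases eq_or_ne c 0 with h0 | h0
          · simp [h0]
          have hms := mem_shuffle w (List.replicate w.length 0) c
          have hms' : c ∈ shuffle w (List.replicate w.length 0) → c ∈ w := by
            intro h
            rcases hms h with h | h
            · exact h
            · exact absurd (List.eq_of_mem_replicate h) h0
          have hall : ∀ d : ℝ, d ∈ pl ∨ d = b ∨ d ∈ w ∨ d ∈ ql → 0 ≤ d := by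
            intro d hd
            apply hnn
            simp only [List.mem_append, List.mem_cons]
            tauto
          apply hall
          simp only [List.mem_append, List.mem_cons, List.mem_singleton,
            List.not_mem_nil, or_false] at hc
          tauto
        · have := hwv.2
          simp only [List.sum_append, List.sum_cons, List.sum_nil, hsumT] at this ⊢
          linarith
      rw [helim (p ++ [a]) (shuffle v v ++ q) (pl ++ [b])
          (shuffle w (List.replicate w.length 0) ++ ql) a
          (by simp [hp]) (by simp [hS, hT, hq, hvw']) hmem' hwv']
      have e3 : (p ++ [a]) ++ (shuffle v v ++ q)
          = (p ++ [a]) ++ shuffle v v ++ q := by simp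
      have e4 : (pl ++ [b]) ++ (shuffle w (List.replicate w.length 0) ++ ql)
          = (pl ++ [b]) ++ shuffle w (List.replicate w.length 0) ++ ql := by simp
      rw [e3, e4, ih w (p ++ [a]) (pl ++ [b]) q ql hvw' (by simp [hp]) hq
          (by intro c hc; apply hmem; simpa using (by simpa using hc))
          (by constructor
              · intro c hc; apply hnn; simp at hc ⊢; tauto
              · have := hwv.2; simp only [List.sum_append, List.sum_cons, List.sum_nil] at this ⊢; linarith)]
      simp

theorem weighted_mean_merge_repeated_entry
    (I : Set ℝ) (M : List ℝ → List ℝ → ℝ)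
    -- nullhomogeneity in the weights
    (hhom : ∀ (x lam : List ℝ) (t : ℝ), 0 < t → x.length = lam.length →
      (∀ a ∈ x, a ∈ I) → IsWeightVec lam → M x (lam.map (fun w => t * w)) = M x lam)
    -- reduction principle
    (hred : ∀ (x lam mu : List ℝ), x.length = lam.length → x.length = mu.length →
      (∀ a ∈ x, a ∈ I) → IsWeightVec lam → IsWeightVec mu →
      M x (List.zipWith (· + ·) lam mu) = M (shuffle x x) (shuffle lam mu))
    -- mean value property
    (hmean : ∀ (x lam : List ℝ), x ≠ [] → x.length = lam.length →
      (∀ a ∈ x, a ∈ I) → IsWeightVec lam →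
      (∃ a ∈ x, a ≤ M x lam) ∧ (∃ a ∈ x, M x lam ≤ a))
    -- elimination principle: an entry with zero weight can be omitted
    (helim : ∀ (x₁ x₂ lam₁ lam₂ : List ℝ) (a : ℝ),
      x₁.length = lam₁.length → x₂.length = lam₂.length →
      (∀ b ∈ x₁ ++ a :: x₂, b ∈ I) → IsWeightVec (lam₁ ++ 0 :: lam₂) →
      M (x₁ ++ a :: x₂) (lam₁ ++ 0 :: lam₂) = M (x₁ ++ x₂) (lam₁ ++ lam₂)) :
    ∀ (x₁ x₂ lam₁ lam₂ : List ℝ) (a lk lk' : ℝ),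
      x₁.length = lam₁.length → x₂.length = lam₂.length →
      (∀ b ∈ x₁ ++ a :: x₂, b ∈ I) → 0 ≤ lk' →
      IsWeightVec (lam₁ ++ lk :: lam₂) →
      M (x₁ ++ a :: a :: x₂) (lam₁ ++ lk :: lk' :: lam₂)
        = M (x₁ ++ a :: x₂) (lam₁ ++ (lk + lk') :: lam₂) := by
  intro x₁ x₂ lam₁ lam₂ a lk lk' h1 h2 hmem hk' hlam
  rcases eq_or_lt_of_le hk' with h0 | h0
  · -- lk' = 0 : direct elimination
    rw [← h0, add_zero]
    have e1 : x₁ ++ a :: a :: x₂ = (x₁ ++ [a]) ++ a :: x₂ := by simp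
    have e2 : lam₁ ++ lk :: (0:ℝ) :: lam₂ = (lam₁ ++ [lk]) ++ 0 :: lam₂ := by simp
    have hm : ∀ b ∈ (x₁ ++ [a]) ++ a :: x₂, b ∈ I := by
      intro b hb
      apply hmem
      simp only [List.mem_append, List.mem_cons, List.mem_singleton,
        List.not_mem_nil, or_false] at hb ⊢
      tauto
    have hw : IsWeightVec ((lam₁ ++ [lk]) ++ 0 :: lam₂) := by
      constructor
      · intro c hc
        simp only [List.mem_append, List.mem_cons, List.mem_singleton,
          List.not_mem_nil, or_false] at hc
        rcases hc with (hc | hc) | hc | hc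
        · exact hlam.1 c (by simp [hc])
        · exact hlam.1 c (by simp [hc])
        · simp [hc]
        · exact hlam.1 c (by simp [hc])
      · have := hlam.2
        simp only [List.sum_append, List.sum_cons, List.sum_nil] at this ⊢
        linarith
    rw [e1, e2, helim (x₁ ++ [a]) x₂ (lam₁ ++ [lk]) lam₂ a (by simp [h1]) h2 hm hw]
    simp
  · -- 0 < lk' : reduction principle
    have hz1len : lam₁.length = (List.replicate lam₁.length (0:ℝ)).length := by simp
    have hmu : IsWeightVec (List.replicate lam₁.length (0:ℝ) ++ lk' :: List.replicate lam₂.length (0:ℝ)) := by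
      constructor
      · intro c hc
        simp only [List.mem_append, List.mem_cons] at hc
        rcases hc with hc | hc | hc
        · rw [List.eq_of_mem_replicate hc]
        · exact hc ▸ hk'
        · rw [List.eq_of_mem_replicate hc]
      · simp [List.sum_replicate]
        linarith
    have hz : List.zipWith (· + ·) (lam₁ ++ lk :: lam₂)
        (List.replicate lam₁.length (0:ℝ) ++ lk' :: List.replicate lam₂.length (0:ℝ))
        = lam₁ ++ (lk + lk') :: lam₂ := by
      rw [List.zipWith_append hz1len]
      simp only [List.zipWith_cons_cons, zipWith_add_repl]
    have hr := hred (x₁ ++ a :: x₂) (lam₁ ++ lk :: lam₂)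
      (List.replicate lam₁.length (0:ℝ) ++ lk' :: List.replicate lam₂.length (0:ℝ))
      (by simp [h1, h2]) (by simp [h1, h2]) hmem hlam hmu
    rw [hz] at hr
    rw [hr, shuffle_append _ _ _ _ rfl, shuffle_append _ _ _ _ hz1len,
      shuffle_cons, shuffle_cons]
    -- goal : M (x₁ ++ a::a::x₂) (lam₁ ++ lk::lk'::lam₂)
    --      = M (shuffle x₁ x₁ ++ a::a::shuffle x₂ x₂) (shuffle lam₁ z₁ ++ lk::lk'::shuffle lam₂ z₂)
    have hA := elimA I M helim
    have hw1 : IsWeightVec ([] ++ lam₁ ++ (lk :: lk' :: lam₂)) := by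
      constructor
      · intro c hc
        simp only [List.nil_append, List.mem_append, List.mem_cons] at hc
        rcases hc with hc | hc | hc | hc
        · exact hlam.1 c (by simp [hc])
        · exact hc ▸ hlam.1 lk (by simp)
        · exact hc ▸ hk'
        · exact hlam.1 c (by simp [hc])
      · have := hlam.2
        simp only [List.nil_append, List.sum_append, List.sum_cons] at this ⊢
        linarith
    have hm1 : ∀ b ∈ [] ++ x₁ ++ (a :: a :: x₂), b ∈ I := by
      intro b hb
      apply hmem
      simp only [List.nil_append, List.mem_append, List.mem_cons] at hb ⊢
      tauto
    have E1 := hA x₁ lam₁ [] [] (a :: a :: x₂) (lk :: lk' :: lam₂) h1 rfl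
      (by simp [h2]) hm1 hw1
    have hslen : (shuffle x₁ x₁).length = (shuffle lam₁ (List.replicate lam₁.length (0:ℝ))).length := by
      rw [shuffle_length x₁ x₁ rfl, shuffle_length lam₁ _ (by simp)]
      simp [h1]
    have hm2 : ∀ b ∈ (shuffle x₁ x₁ ++ [a, a]) ++ x₂ ++ [], b ∈ I := by
      intro b hb
      have hms := mem_shuffle x₁ x₁ b
      have hall : ∀ d : ℝ, d ∈ x₁ ∨ d = a ∨ d ∈ x₂ → d ∈ I := by
        intro d hd
        apply hmem
        simp only [List.mem_append, List.mem_cons]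
        tauto
      apply hall
      simp only [List.mem_append, List.mem_cons, List.mem_singleton,
        List.not_mem_nil, or_false] at hb
      tauto
    have hw2 : IsWeightVec ((shuffle lam₁ (List.replicate lam₁.length (0:ℝ)) ++ [lk, lk']) ++ lam₂ ++ []) := by
      constructor
      · intro c hc
        have hms := mem_shuffle lam₁ (List.replicate lam₁.length (0:ℝ)) c
        rcases eq_or_ne c 0 with hc0 | hc0
        · simp [hc0]
        have hall : ∀ d : ℝ, d ∈ lam₁ ∨ d = lk ∨ d ∈ lam₂ → 0 ≤ d := by
          intro d hd
          apply hlam.1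
          simp only [List.mem_append, List.mem_cons]
          tauto
        simp only [List.mem_append, List.mem_cons, List.mem_singleton,
          List.not_mem_nil, or_false] at hc
        rcases hc with (hc | hc | hc) | hc
        · rcases hms hc with h | h
          · exact hall c (by tauto)
          · exact absurd (List.eq_of_mem_replicate h) hc0
        · exact hc ▸ hall lk (by tauto)
        · exact hc ▸ hk'
        · exact hall c (by tauto)
      · have := hlam.2
        have hss : (shuffle lam₁ (List.replicate lam₁.length (0:ℝ))).sum = lam₁.sum := by
          rw [sum_shuffle lam₁ _ (by simp)]
          simp
        simp only [List.sum_append, List.sum_cons, List.sum_nil, hss] at this ⊢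
        linarith
    have E2 := hA x₂ lam₂ (shuffle x₁ x₁ ++ [a, a])
      (shuffle lam₁ (List.replicate lam₁.length (0:ℝ)) ++ [lk, lk']) [] [] h2
      (by simp [hslen]) rfl hm2 hw2
    simp only [List.nil_append, List.append_nil] at E1 E2
    rw [← E1]
    rw [show shuffle x₁ x₁ ++ a :: a :: x₂ = (shuffle x₁ x₁ ++ [a, a]) ++ x₂ by simp,
      show shuffle lam₁ (List.replicate lam₁.length (0:ℝ)) ++ lk :: lk' :: lam₂
        = (shuffle lam₁ (List.replicate lam₁.length (0:ℝ)) ++ [lk, lk']) ++ lam₂ by simp]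
    rw [← E2]
    simp
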